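/- For p = (p12,p13,p14,p23,p24,p34) a vector of nonnegative reals, the determinant of the symmetric 4×4 matrix L(p) with zero diagonal and off-diagonal entries L(p)_{ij}=p_{ij} equals -(√(p12 p34)+√(p13 p24)+√(p14 p23))·(-√(p12 p34)+√(p13 p24)+√(p14 p23))·(√(p12 p34)-√(p13 p24)+√(p14 p23))·(√(p12 p34)+√(p13 p24)-√(p14 p23)). -/

import Mathlib

open Real

theorem det_L_eq (p12 p13 p14 p23 p24 p34 : ℝ)
    (h12 : 0 ≤ p12) (h13 : 0 ≤ p13) (h14 : 0 ≤ p14)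
    (h23 : 0 ≤ p23) (h24 : 0 ≤ p24) (h34 : 0 ≤ p34) :
    (!![(0:ℝ), p12, p13, p14;
        p12, 0, p23, p24;
        p13, p23, 0, p34;
        p14, p24, p34, 0]).det =
      -(Real.sqrt (p12*p34) + Real.sqrt (p13*p24) + Real.sqrt (p14*p23))
        * (-Real.sqrt (p12*p34) + Real.sqrt (p13*p24) + Real.sqrt (p14*p23))
        * (Real.sqrt (p12*p34) - Real.sqrt (p13*p24) + Real.sqrt (p14*p23))
        * (Real.sqrt (p12*p34) + Real.sqrt (p13*p24) - Real.sqrt (p14*p23)) := by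
  have key : ∀ a b c : ℝ, -(a+b+c) * (-a+b+c) * (a-b+c) * (a+b-c) =
      (a^2)^2 + (b^2)^2 + (c^2)^2 - 2*(a^2)*(b^2) - 2*(b^2)*(c^2) - 2*(c^2)*(a^2) := by
    intros; ring
  rw [key, Real.sq_sqrt (mul_nonneg h12 h34), Real.sq_sqrt (mul_nonneg h13 h24),
    Real.sq_sqrt (mul_nonneg h14 h23)]
  simp [Matrix.det_succ_row_zero, Fin.sum_univ_succ,
    show (Fin.succAbove 1 2 : Fin 4) = 3 from rfl, show (Fin.succAbove 2 2 : Fin 4) = 3 from rfl,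
    show (Fin.castSucc 2 : Fin 4) = 2 from rfl, show (Fin.succAbove 3 2 : Fin 4) = 2 from rfl]
  ring
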